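/- Let f : 𝕆 → 𝕆 be a real-linear map on the octonions satisfying f(p·x) = conj(p)·f(x) for all octonions p and x. Then f = 0. -/

import Mathlib

noncomputable section

/-- The octonions, realized as the Cayley–Dickson double of the quaternions. -/
abbrev 𝕆 : Type := Quaternion ℝ × Quaternion ℝ

/-- Octonion multiplication via the Cayley–Dickson formula
`(a,b)(c,d) = (ac - d̄b, da + bc̄)`. -/
def omul (x y : 𝕆) : 𝕆 :=
  (x.1 * y.1 - star y.2 * x.2, y.2 * x.1 + x.2 * star y.1)

/-- Octonionic conjugation. -/
def oconj (x : 𝕆) : 𝕆 := (star x.1, -x.2)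

/-- The octonion `1`. -/
def oone : 𝕆 := (1, 0)

/-- Real part of an octonion. -/
def ore (x : 𝕆) : ℝ := x.1.re

/-- Embedding of the reals into the octonions. -/
def oreal (r : ℝ) : 𝕆 := ((r : Quaternion ℝ), 0)

/-- Squared norm of an octonion. -/
def onormSq (x : 𝕆) : ℝ := ore (omul x (oconj x))

/-- Quaternion literal `⟨a, b, c, d⟩` typed as `Quaternion ℝ`. -/
def qlit (a b c d : ℝ) : Quaternion ℝ := ⟨a, b, c, d⟩

@[simp] theorem qlit_re (a b c d : ℝ) : (qlit a b c d).re = a := rfl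
@[simp] theorem qlit_imI (a b c d : ℝ) : (qlit a b c d).imI = b := rfl
@[simp] theorem qlit_imJ (a b c d : ℝ) : (qlit a b c d).imJ = c := rfl
@[simp] theorem qlit_imK (a b c d : ℝ) : (qlit a b c d).imK = d := rfl

set_option maxHeartbeats 2000000 in
/-- Any real-linear map f on the octonions with f(p*x) = conj(p)*f(x) is zero. -/
theorem stmt_0 (f : 𝕆 →ₗ[ℝ] 𝕆)
    (hf : ∀ p x : 𝕆, f (omul p x) = omul (oconj p) (f x)) :
    f = 0 := by
  set y := f oone with hy
  have hone : ∀ p : 𝕆, omul p oone = p := by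
    intro p
    simp [omul, oone]
  have hfp : ∀ p : 𝕆, f p = omul (oconj p) y := by
    intro p
    rw [← hone p, hf, hone]
  have key : ∀ p q : 𝕆, omul (oconj (omul p q)) y = omul (oconj p) (omul (oconj q) y) := by
    intro p q
    rw [← hfp, hf, hfp]
  have h1 := key (qlit 0 1 0 0, 0) (qlit 0 0 1 0, 0)
  have h2 := key (qlit 0 1 0 0, 0) (0, qlit 1 0 0 0)
  have h3 := key (qlit 0 1 0 0, 0) (0, qlit 0 0 1 0)
  simp [omul, oconj, Prod.ext_iff, Quaternion.ext_iff, Quaternion.re_mul, Quaternion.imI_mul, Quaternion.imJ_mul, Quaternion.imK_mul] at h1 h2 h3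
  have hy0 : y = 0 := by
    obtain ⟨p1,p2,p3,p4⟩ := h1
    obtain ⟨⟨q1,q2⟩,q3,q4⟩ := h2
    obtain ⟨⟨r1,r2⟩,r3,r4⟩ := h3
    ext <;> simp [Quaternion.re_zero, Quaternion.imI_zero, Quaternion.imJ_zero, Quaternion.imK_zero] <;> linarith
  ext x <;> simp [hfp, hy0, omul]
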